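/- Let G be a finite group with a normal subgroup N, let K ⊆ E be a field extension of finite degree s, and let A = M_m(E). Suppose G acts on A on the right by K-algebra automorphisms x ↦ x^g; suppose for each g ∈ G there is a field automorphism σ_g of E fixing K pointwise such that (z·x)^g = σ_g(z)·x^g for all z ∈ E and x ∈ A; and suppose X : N → GL_m(E) is a group homomorphism with x^n = X(n)⁻¹ x X(n) for all n ∈ N, x ∈ A, and X(n)^g = X(g⁻¹ n g) for all n ∈ N, g ∈ G. Let ι, ι' : A → M_{ms}(K) be two unitary embeddings of K-algebras, and let Y, Y' : G → GL_{ms}(K) be functions such that Y satisfies conditions (1)–(3) with respect to ι and Y' satisfies them with respect to ι' (namely Y(g)⁻¹ι(x)Y(g) = ι(x^g), Y(n) = ι(X(n)), Y(gn) = Y(g)Y(n), Y(ng) = Y(n)Y(g), and the analogous identities for Y' and ι'). Let α, α' : G × G → E^× be the functions determined by Y(g)Y(h) = Y(gh)·ι(α(g,h)·I_m) and Y'(g)Y'(h) = Y'(gh)·ι'(α'(g,h)·I_m). Then there exists a function γ : G → E^× satisfying γ(gn) = γ(g) for all g ∈ G, n ∈ N (in particular γ(n) = 1 for n ∈ N),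 such that α'(g,h) = α(g,h)·σ_h(γ(g))·γ(h)·γ(gh)⁻¹ for all g, h ∈ G; that is, the factor sets α and α' are cohomologous via a function constant on N-cosets, so they determine the same class in H²(G/N, E^×). -/

import Mathlib

open Matrix Module

section Helpers

variable {K E : Type} [Field K] [Field E] [Algebra K E] [FiniteDimensional K E]

private lemma sum_mulVec' {n p : Type} [Fintype n] [Fintype p] {R : Type} [CommRing R]
    (f : p → Matrix n n R) (w : n → R) :
    (∑ i, f i) *ᵥ w = ∑ i, f i *ᵥ w := by
  ext k
  simp only [Matrix.mulVec, dotProduct, Matrix.sum_apply, Finset.sum_apply, Finset.sum_mul]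
  rw [Finset.sum_comm]

private lemma sum_diag_std (m : ℕ) :
    (∑ i : Fin m, Matrix.single i i (1 : E)) = 1 := by
  ext a b
  rw [Matrix.sum_apply]
  by_cases h : a = b
  · subst h
    rw [Matrix.one_apply_eq, Finset.sum_eq_single a (fun i _ hi =>
      Matrix.single_apply_of_ne _ _ _ _ _ (by tauto)) (by simp)]
    simp
  · rw [Matrix.one_apply_ne h, Finset.sum_eq_zero]
    intro i _
    exact Matrix.single_apply_of_ne _ _ _ _ _ (by rintro ⟨rfl, rfl⟩; exact h rfl)

theorem exists_equivariant (m s : ℕ) (hm : 0 < m) (hs : finrank K E = s)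
    (ι : Matrix (Fin m) (Fin m) E →ₐ[K] Matrix (Fin (m * s)) (Fin (m * s)) K)
    (hι : Function.Injective ι) :
    ∃ S : (Fin m → E) ≃ₗ[K] (Fin (m * s) → K),
      ∀ (x : Matrix (Fin m) (Fin m) E) (w : Fin m → E), S (x *ᵥ w) = ι x *ᵥ S w := by
  classical
  set o : Fin m := ⟨0, hm⟩ with ho
  set e : Fin m → Fin m → Matrix (Fin (m * s)) (Fin (m * s)) K :=
    fun i j => ι (Matrix.single i j 1) with he
  have he_mul : ∀ i j k : Fin m, e i j * e j k = e i k := by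
    intro i j k
    simp only [he]
    rw [← _root_.map_mul, Matrix.single_mul_single_same, mul_one]
  have he_mul_ne : ∀ (i j k l : Fin m), j ≠ k → e i j * e k l = 0 := by
    intro i j k l h
    simp only [he]
    rw [← _root_.map_mul, Matrix.single_mul_single_of_ne _ _ _ _ h, map_zero]
  have hesum : (∑ i : Fin m, e i i) = 1 := by
    simp only [he]
    rw [← map_sum, sum_diag_std, _root_.map_one]
  -- the submodule W
  set W : Submodule K (Fin (m * s) → K) := LinearMap.range (Matrix.mulVecLin (e o o)) with hW
  have hmemW : ∀ w : Fin (m * s) → K, e o o *ᵥ w = w → w ∈ W := by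
    intro w hw
    exact ⟨w, by simpa [Matrix.mulVecLin_apply] using hw⟩
  have hfixW : ∀ w ∈ W, e o o *ᵥ w = w := by
    rintro w ⟨u, rfl⟩
    simp only [Matrix.mulVecLin_apply, Matrix.mulVec_mulVec, he_mul]
  -- dimension of W
  have hWrank : finrank K W = s := by
    let fwd : (Fin (m * s) → K) →ₗ[K] (Fin m → W) :=
      LinearMap.pi fun i => (Matrix.mulVecLin (e o i)).codRestrict W
        (fun w => hmemW _ (by rw [Matrix.mulVecLin_apply, Matrix.mulVec_mulVec, he_mul]))
    let bwd : (Fin m → W) →ₗ[K] (Fin (m * s) → K) :=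
      ∑ i : Fin m, (Matrix.mulVecLin (e i o)) ∘ₗ ((W.subtype) ∘ₗ (LinearMap.proj i))
    have hbwd : ∀ u : Fin m → W, bwd u = ∑ j : Fin m, e j o *ᵥ (u j : Fin (m * s) → K) := by
      intro u
      simp [bwd, LinearMap.sum_apply, Matrix.mulVecLin_apply]
    have h1 : ∀ u, fwd (bwd u) = u := by
      intro u
      funext i
      apply Subtype.ext
      show e o i *ᵥ (bwd u) = ((u i : Fin (m * s) → K))
      rw [hbwd]
      have : ∀ j : Fin m, e o i *ᵥ (e j o *ᵥ (u j : Fin (m * s) → K))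
          = if i = j then ((u j : Fin (m * s) → K)) else 0 := by
        intro j
        by_cases hij : i = j
        · subst hij
          rw [Matrix.mulVec_mulVec, he_mul, if_pos rfl]
          exact hfixW _ (u i).2
        · rw [Matrix.mulVec_mulVec, he_mul_ne _ _ _ _ hij, Matrix.zero_mulVec, if_neg hij]
      have hsum : e o i *ᵥ (∑ j : Fin m, e j o *ᵥ (u j : Fin (m * s) → K))
          = ∑ j : Fin m, e o i *ᵥ (e j o *ᵥ (u j : Fin (m * s) → K)) := by
        rw [← Matrix.mulVecLin_apply, map_sum]
        simp [Matrix.mulVecLin_apply]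
      rw [hsum]
      rw [Finset.sum_congr rfl fun j _ => this j, Finset.sum_ite_eq (Finset.univ) i
        (fun j => ((u j : Fin (m * s) → K)))]
      simp
    have h2 : ∀ w, bwd (fwd w) = w := by
      intro w
      rw [hbwd]
      have : ∀ j : Fin m, ((fwd w j : Fin (m * s) → K)) = e o j *ᵥ w := fun j => rfl
      calc (∑ j : Fin m, e j o *ᵥ ((fwd w j : Fin (m * s) → K)))
          = ∑ j : Fin m, e j j *ᵥ w := by
            refine Finset.sum_congr rfl fun j _ => ?_
            rw [this, Matrix.mulVec_mulVec, he_mul]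
        _ = (∑ j : Fin m, e j j) *ᵥ w := (sum_mulVec' _ _).symm
        _ = w := by rw [hesum, Matrix.one_mulVec]
    let eqv : (Fin (m * s) → K) ≃ₗ[K] (Fin m → W) :=
      { toLinearMap := fwd, invFun := bwd, left_inv := h2, right_inv := h1 }
    have hr1 : finrank K (Fin (m * s) → K) = m * s := by
      rw [Module.finrank_pi, Fintype.card_fin]
    have hr2 : finrank K (Fin m → W) = m * finrank K W := by
      rw [Module.finrank_pi_fintype, Finset.sum_const, Finset.card_univ, Fintype.card_fin,
        smul_eq_mul]
    have := eqv.finrank_eq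
    rw [hr1, hr2] at this
    exact (Nat.eq_of_mul_eq_mul_left hm this.symm)
  -- a nonzero vector of W
  have heo : e o o ≠ 0 := by
    simp only [he]
    intro h
    have := hι (h.trans (map_zero ι).symm)
    have h2 := congrFun (congrFun this o) o
    rw [Matrix.single_apply_same] at h2
    simp at h2
  obtain ⟨w0, hw0⟩ : ∃ w0, e o o *ᵥ w0 ≠ 0 := by
    by_contra h
    push_neg at h
    apply heo
    ext a b
    have h' := h (Pi.single b 1)
    rw [Matrix.mulVec_single] at h'
    have := congrFun h' a
    simpa using this
  set v : Fin (m * s) → K := e o o *ᵥ w0 with hv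
  have hv0 : v ≠ 0 := hw0
  have hvW : e o o *ᵥ v = v := by
    rw [hv, Matrix.mulVec_mulVec, he_mul]
  -- the map Φ₀
  let Φ₀ : E →ₗ[K] (Fin (m * s) → K) :=
    { toFun := fun z => ι (z • Matrix.single o o 1) *ᵥ v
      map_add' := fun a b => by
        show ι ((a + b) • Matrix.single o o 1) *ᵥ v
            = ι (a • Matrix.single o o 1) *ᵥ v + ι (b • Matrix.single o o 1) *ᵥ v
        rw [add_smul, map_add, Matrix.add_mulVec]
      map_smul' := fun k z => by
        show ι ((k • z) • Matrix.single o o 1) *ᵥ v = k • (ι (z • Matrix.single o o 1) *ᵥ v)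
        rw [smul_assoc, _root_.map_smul, Matrix.smul_mulVec] }
  have hΦ₀zero : ∀ z : E, Φ₀ z = 0 → z = 0 := by
    intro z hz
    by_contra hz0
    have key : (z⁻¹ • Matrix.single o o (1 : E)) * (z • Matrix.single o o 1)
        = Matrix.single o o 1 := by
      rw [smul_mul_smul_comm, inv_mul_cancel₀ hz0, one_smul, Matrix.single_mul_single_same, mul_one]
    have : v = 0 := by
      have h1 : v = ι (Matrix.single o o 1) *ᵥ v := hvW.symm
      have hz' : ι (z • Matrix.single o o 1) *ᵥ v = 0 := hz
      rw [h1, ← key, _root_.map_mul, ← Matrix.mulVec_mulVec, hz', Matrix.mulVec_zero]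
    exact hv0 this
  have hΦ₀mem : ∀ z : E, Φ₀ z ∈ W := by
    intro z
    apply hmemW
    show e o o *ᵥ (ι (z • Matrix.single o o 1) *ᵥ v) = ι (z • Matrix.single o o 1) *ᵥ v
    rw [Matrix.mulVec_mulVec]
    congr 1
    simp only [he]
    rw [← _root_.map_mul, mul_smul_comm, Matrix.single_mul_single_same, one_mul]
  let Φ : E →ₗ[K] W := Φ₀.codRestrict W hΦ₀mem
  have hΦinj : Function.Injective Φ := by
    intro a b hab
    have : Φ₀ (a - b) = 0 := by
      rw [map_sub]
      have := congrArg (Subtype.val) hab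
      change Φ₀ a = Φ₀ b at this
      rw [this, sub_self]
    exact sub_eq_zero.mp (hΦ₀zero _ this)
  have hΦsurj : Function.Surjective Φ := by
    refine (LinearMap.injective_iff_surjective_of_finrank_eq_finrank ?_).mp hΦinj
    rw [hs, hWrank]
  have hspan : ∀ w : Fin (m * s) → K, e o o *ᵥ w = w →
      ∃ z : E, ι (z • Matrix.single o o 1) *ᵥ v = w := by
    intro w hw
    obtain ⟨z, hz⟩ := hΦsurj ⟨w, hmemW w hw⟩
    exact ⟨z, congrArg Subtype.val hz⟩
  -- the equivariant map
  let Sfun : (Fin m → E) →ₗ[K] (Fin (m * s) → K) :=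
    { toFun := fun w => ∑ i : Fin m, ι (w i • Matrix.single i o 1) *ᵥ v
      map_add' := fun a b => by
        rw [← Finset.sum_add_distrib]
        refine Finset.sum_congr rfl fun i _ => ?_
        rw [Pi.add_apply, add_smul, map_add, Matrix.add_mulVec]
      map_smul' := fun k a => by
        simp only [RingHom.id_apply, Finset.smul_sum]
        refine Finset.sum_congr rfl fun i _ => ?_
        rw [Pi.smul_apply, smul_assoc, _root_.map_smul, Matrix.smul_mulVec] }
  have hSapp : ∀ w, Sfun w = ∑ i : Fin m, ι (w i • Matrix.single i o 1) *ᵥ v := fun w => rfl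
  have hkey : ∀ (w : Fin m → E) (i : Fin m), e o i *ᵥ Sfun w
      = ι (w i • Matrix.single o o 1) *ᵥ v := by
    intro w i
    rw [hSapp]
    have hsum : e o i *ᵥ (∑ k : Fin m, ι (w k • Matrix.single k o 1) *ᵥ v)
        = ∑ k : Fin m, e o i *ᵥ (ι (w k • Matrix.single k o 1) *ᵥ v) := by
      rw [← Matrix.mulVecLin_apply, map_sum]
      simp [Matrix.mulVecLin_apply]
    rw [hsum]
    rw [Finset.sum_eq_single i]
    · rw [Matrix.mulVec_mulVec]
      congr 1
      simp only [he]
      rw [← _root_.map_mul, mul_smul_comm, Matrix.single_mul_single_same, one_mul]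
    · intro k _ hk
      rw [Matrix.mulVec_mulVec]
      simp only [he]
      rw [← _root_.map_mul, mul_smul_comm, Matrix.single_mul_single_of_ne _ _ _ _ (Ne.symm hk),
        smul_zero, map_zero, Matrix.zero_mulVec]
    · simp
  have hSinj : Function.Injective Sfun := by
    rw [injective_iff_map_eq_zero]
    intro w hw
    funext i
    show w i = (0 : Fin m → E) i
    rw [Pi.zero_apply]
    apply hΦ₀zero
    show ι (w i • Matrix.single o o 1) *ᵥ v = 0
    rw [← hkey w i, hw, Matrix.mulVec_zero]
  have hSsurj : Function.Surjective Sfun := by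
    intro u
    have hz : ∀ i : Fin m, ∃ z : E, ι (z • Matrix.single o o 1) *ᵥ v = e o i *ᵥ u :=
      fun i => hspan _ (by rw [Matrix.mulVec_mulVec, he_mul])
    choose z hz using hz
    refine ⟨z, ?_⟩
    rw [hSapp]
    have hterm : ∀ i : Fin m, ι (z i • Matrix.single i o 1) *ᵥ v = e i i *ᵥ u := by
      intro i
      have h1 : ι (z i • Matrix.single i o (1:E))
          = e i o * ι (z i • Matrix.single o o 1) := by
        simp only [he]
        rw [← _root_.map_mul, mul_smul_comm, Matrix.single_mul_single_same, one_mul]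
      rw [h1, ← Matrix.mulVec_mulVec, hz i, Matrix.mulVec_mulVec, he_mul]
    rw [Finset.sum_congr rfl fun i _ => hterm i, ← sum_mulVec', hesum, Matrix.one_mulVec]
  have hequiv : ∀ (x : Matrix (Fin m) (Fin m) E) (w : Fin m → E),
      Sfun (x *ᵥ w) = ι x *ᵥ Sfun w := by
    intro x w
    rw [hSapp, hSapp]
    have hx : ∀ j : Fin m, x * (w j • Matrix.single j o (1:E))
        = ∑ i : Fin m, (x i j * w j) • Matrix.single i o 1 := by
      intro j
      ext a b
      rw [Matrix.sum_apply]
      by_cases hb : b = o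
      · subst hb
        rw [mul_smul_comm, Matrix.smul_apply, Matrix.mul_single_apply_same, mul_one,
          smul_eq_mul]
        rw [Finset.sum_eq_single a]
        · rw [Matrix.smul_apply, Matrix.single_apply_same, smul_eq_mul, mul_one, mul_comm]
        · intro i _ hi
          rw [Matrix.smul_apply, Matrix.single_apply_of_ne _ _ _ _ _ (by tauto), smul_zero]
        · simp
      · rw [mul_smul_comm, Matrix.smul_apply, Matrix.mul_single_apply_of_ne _ _ _ _ _ hb,
          smul_zero]
        rw [Finset.sum_eq_zero]
        intro i _
        rw [Matrix.smul_apply, Matrix.single_apply_of_ne _ _ _ _ _ (by tauto), smul_zero]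
    have hrhs : ι x *ᵥ (∑ j : Fin m, ι (w j • Matrix.single j o 1) *ᵥ v)
        = ∑ j : Fin m, ∑ i : Fin m, ι ((x i j * w j) • Matrix.single i o 1) *ᵥ v := by
      have h1 : ι x *ᵥ (∑ j : Fin m, ι (w j • Matrix.single j o 1) *ᵥ v)
          = ∑ j : Fin m, ι x *ᵥ (ι (w j • Matrix.single j o 1) *ᵥ v) := by
        rw [← Matrix.mulVecLin_apply, map_sum]
        simp [Matrix.mulVecLin_apply]
      rw [h1]
      refine Finset.sum_congr rfl fun j _ => ?_
      rw [Matrix.mulVec_mulVec, ← _root_.map_mul, hx, map_sum, sum_mulVec']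
    have hlhs : (∑ i : Fin m, ι ((x *ᵥ w) i • Matrix.single i o 1) *ᵥ v)
        = ∑ i : Fin m, ∑ j : Fin m, ι ((x i j * w j) • Matrix.single i o 1) *ᵥ v := by
      refine Finset.sum_congr rfl fun i _ => ?_
      have : (x *ᵥ w) i = ∑ j : Fin m, x i j * w j := by
        simp [Matrix.mulVec, dotProduct]
      rw [this, Finset.sum_smul, map_sum, sum_mulVec']
    rw [hlhs, hrhs, Finset.sum_comm]
  refine ⟨LinearEquiv.ofBijective Sfun ⟨hSinj, hSsurj⟩, fun x w => ?_⟩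
  show Sfun (x *ᵥ w) = ι x *ᵥ Sfun w
  exact hequiv x w


theorem centralizer_scalar (m s : ℕ) (hm : 0 < m) (hs : finrank K E = s)
    (ι : Matrix (Fin m) (Fin m) E →ₐ[K] Matrix (Fin (m * s)) (Fin (m * s)) K)
    (hι : Function.Injective ι)
    (u : Matrix (Fin (m * s)) (Fin (m * s)) K) (hu : IsUnit u)
    (hc : ∀ x, u * ι x = ι x * u) :
    ∃ z : Eˣ, u = ι ((z : E) • 1) := by
  classical
  obtain ⟨S, hS⟩ := exists_equivariant m s hm hs ι hι
  set φL : (Fin m → E) →ₗ[K] (Fin m → E) :=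
    (S.symm.toLinearMap.comp (Matrix.mulVecLin u)).comp S.toLinearMap with hφL
  have hφapp : ∀ w, φL w = S.symm (u *ᵥ S w) := fun w => rfl
  have hφcomm : ∀ (x : Matrix (Fin m) (Fin m) E) (w : Fin m → E),
      φL (x *ᵥ w) = x *ᵥ φL w := by
    intro x w
    apply S.injective
    rw [hS, hφapp, hφapp, S.apply_symm_apply]
    calc u *ᵥ S (x *ᵥ w) = u *ᵥ (ι x *ᵥ S w) := by rw [hS]
      _ = (u * ι x) *ᵥ S w := by rw [Matrix.mulVec_mulVec]
      _ = (ι x * u) *ᵥ S w := by rw [hc]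
      _ = ι x *ᵥ (u *ᵥ S w) := by rw [← Matrix.mulVec_mulVec]
      _ = ι x *ᵥ S (S.symm (u *ᵥ S w)) := by rw [S.apply_symm_apply]
  have hφsmul : ∀ (z : E) (w : Fin m → E), φL (z • w) = z • φL w := by
    intro z w
    have h1 : ∀ w' : Fin m → E, (z • (1 : Matrix (Fin m) (Fin m) E)) *ᵥ w' = z • w' := by
      intro w'
      rw [Matrix.smul_mulVec, Matrix.one_mulVec]
    rw [← h1, hφcomm, h1]
  set B : Matrix (Fin m) (Fin m) E := Matrix.of fun i j => φL (Pi.single j 1) i with hB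
  have hφB : ∀ w, φL w = B *ᵥ w := by
    intro w
    have hw : w = ∑ j : Fin m, w j • (Pi.single j 1 : Fin m → E) := by
      funext i
      rw [Finset.sum_apply, Finset.sum_eq_single i]
      · simp
      · intro j _ hj
        simp [Pi.single_apply, Ne.symm hj]
      · simp
    conv_lhs => rw [hw]
    rw [map_sum]
    funext i
    rw [Finset.sum_apply, Matrix.mulVec]
    simp only [dotProduct]
    refine Finset.sum_congr rfl fun j _ => ?_
    rw [hφsmul, Pi.smul_apply, smul_eq_mul, hB]
    simp only [Matrix.of_apply]
    ring
  have hBcomm : ∀ x : Matrix (Fin m) (Fin m) E, B * x = x * B := by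
    intro x
    ext i j
    have h1 : (B * x) *ᵥ Pi.single j 1 = (x * B) *ᵥ Pi.single j 1 := by
      rw [← Matrix.mulVec_mulVec, ← Matrix.mulVec_mulVec, ← hφB, ← hφB, hφcomm]
    have := congrFun h1 i
    rw [Matrix.mulVec_single, Matrix.mulVec_single] at this
    simpa using this
  obtain ⟨z0, hz0⟩ := Matrix.mem_range_scalar_of_commute_single
    (M := B) (fun i j _ => (hBcomm _).symm)
  have hB1 : B = z0 • 1 := by
    rw [← hz0, Matrix.scalar_apply, Matrix.smul_one_eq_diagonal]
  have hueq : u = ι (z0 • 1) := by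
    have hvec : ∀ w : Fin m → E, u *ᵥ S w = ι (z0 • 1) *ᵥ S w := by
      intro w
      have h1 : S.symm (u *ᵥ S w) = (z0 • (1 : Matrix (Fin m) (Fin m) E)) *ᵥ w := by
        rw [← hφapp, hφB, hB1]
      have h2 : u *ᵥ S w = S ((z0 • (1 : Matrix (Fin m) (Fin m) E)) *ᵥ w) := by
        rw [← h1, S.apply_symm_apply]
      rw [h2, hS]
    ext i j
    have h3 := hvec (S.symm (Pi.single j 1))
    rw [S.apply_symm_apply] at h3
    have := congrFun h3 i
    rw [Matrix.mulVec_single, Matrix.mulVec_single] at this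
    simpa using this
  have hs0 : 0 < s := hs ▸ Module.finrank_pos
  haveI : Nonempty (Fin (m * s)) := ⟨⟨0, Nat.mul_pos hm hs0⟩⟩
  have hz0ne : z0 ≠ 0 := by
    intro h
    subst h
    rw [zero_smul, map_zero] at hueq
    exact hu.ne_zero hueq
  exact ⟨Units.mk0 z0 hz0ne, hueq⟩


end Helpers



/-- In the setting of Statements 3–4, given two unitary embeddings `ι, ι'`
with corresponding functions `Y, Y'` satisfying conditions (1)–(3), and the factor sets
`α, α' : G × G → Eˣ` they determine, there is `γ : G → Eˣ`, constant on `N`-cosets with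
`γ(n) = 1` on `N`, such that `α'(g,h) = α(g,h)·σ_h(γ(g))·γ(h)·γ(gh)⁻¹`; i.e. `α` and `α'` are
cohomologous via a function constant on `N`-cosets, so they give the same class in
`H²(G/N, E^×)`. -/
theorem stmt_10 (G : Type) [Group G] [Fintype G] (N : Subgroup G) (hN : N.Normal)
    (K E : Type) [Field K] [Field E] [Algebra K E] [FiniteDimensional K E]
    (s : ℕ) (hs : Module.finrank K E = s) (m : ℕ) (hm : 0 < m)
    (act : G → (Matrix (Fin m) (Fin m) E ≃ₐ[K] Matrix (Fin m) (Fin m) E))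
    (hact1 : ∀ x : Matrix (Fin m) (Fin m) E, act 1 x = x)
    (hactmul : ∀ (g h : G) (x : Matrix (Fin m) (Fin m) E), act h (act g x) = act (g * h) x)
    (σ : G → (E ≃ₐ[K] E))
    (hσ : ∀ (g : G) (z : E) (x : Matrix (Fin m) (Fin m) E),
      act g (z • x) = σ g z • act g x)
    (X : N →* (Matrix (Fin m) (Fin m) E)ˣ)
    (hXconj : ∀ (n : N) (x : Matrix (Fin m) (Fin m) E),
      act ↑n x = (↑((X n)⁻¹) : Matrix (Fin m) (Fin m) E) * x * (↑(X n) : Matrix (Fin m) (Fin m) E))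
    (hXact : ∀ (n : N) (g : G),
      act g (↑(X n) : Matrix (Fin m) (Fin m) E)
        = (↑(X ⟨g⁻¹ * ↑n * g, hN.conj_mem' ↑n n.2 g⟩) : Matrix (Fin m) (Fin m) E))
    (ι ι' : Matrix (Fin m) (Fin m) E →ₐ[K] Matrix (Fin (m * s)) (Fin (m * s)) K)
    (hι : Function.Injective ⇑ι) (hι' : Function.Injective ⇑ι')
    (Y Y' : G → (Matrix (Fin (m * s)) (Fin (m * s)) K)ˣ)
    (hY1 : ∀ (x : Matrix (Fin m) (Fin m) E) (g : G),
      (↑((Y g)⁻¹) : Matrix (Fin (m * s)) (Fin (m * s)) K) * ι x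
          * (↑(Y g) : Matrix (Fin (m * s)) (Fin (m * s)) K) = ι (act g x))
    (hY2 : ∀ n : N, (↑(Y ↑n) : Matrix (Fin (m * s)) (Fin (m * s)) K)
        = ι (↑(X n) : Matrix (Fin m) (Fin m) E))
    (hY3 : ∀ (g : G) (n : N), Y (g * ↑n) = Y g * Y ↑n ∧ Y (↑n * g) = Y ↑n * Y g)
    (hY1' : ∀ (x : Matrix (Fin m) (Fin m) E) (g : G),
      (↑((Y' g)⁻¹) : Matrix (Fin (m * s)) (Fin (m * s)) K) * ι' x
          * (↑(Y' g) : Matrix (Fin (m * s)) (Fin (m * s)) K) = ι' (act g x))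
    (hY2' : ∀ n : N, (↑(Y' ↑n) : Matrix (Fin (m * s)) (Fin (m * s)) K)
        = ι' (↑(X n) : Matrix (Fin m) (Fin m) E))
    (hY3' : ∀ (g : G) (n : N), Y' (g * ↑n) = Y' g * Y' ↑n ∧ Y' (↑n * g) = Y' ↑n * Y' g)
    (α α' : G → G → Eˣ)
    (hα : ∀ g h : G,
      (↑(Y g) : Matrix (Fin (m * s)) (Fin (m * s)) K)
          * (↑(Y h) : Matrix (Fin (m * s)) (Fin (m * s)) K)
        = (↑(Y (g * h)) : Matrix (Fin (m * s)) (Fin (m * s)) K)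
          * ι ((↑(α g h) : E) • (1 : Matrix (Fin m) (Fin m) E)))
    (hα' : ∀ g h : G,
      (↑(Y' g) : Matrix (Fin (m * s)) (Fin (m * s)) K)
          * (↑(Y' h) : Matrix (Fin (m * s)) (Fin (m * s)) K)
        = (↑(Y' (g * h)) : Matrix (Fin (m * s)) (Fin (m * s)) K)
          * ι' ((↑(α' g h) : E) • (1 : Matrix (Fin m) (Fin m) E))) :
    ∃ γ : G → Eˣ,
      (∀ (g : G) (n : N), γ (g * ↑n) = γ g) ∧
      (∀ n : N, γ ↑n = 1) ∧
      (∀ g h : G,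
        (↑(α' g h) : E)
          = (↑(α g h) : E) * σ h (↑(γ g) : E) * (↑(γ h) : E) * (↑(γ (g * h))⁻¹ : E)) := by
  classical
  obtain ⟨S, hS⟩ := exists_equivariant m s hm hs ι hι
  obtain ⟨S', hS'⟩ := exists_equivariant m s hm hs ι' hι'
  -- the intertwining linear equivalence
  let Tl : (Fin (m * s) → K) ≃ₗ[K] (Fin (m * s) → K) := S'.symm.trans S
  have hTl : ∀ (x : Matrix (Fin m) (Fin m) E) (w : Fin (m * s) → K),
      Tl (ι' x *ᵥ w) = ι x *ᵥ Tl w := by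
    intro x w
    obtain ⟨w0, rfl⟩ := S'.surjective w
    show S (S'.symm (ι' x *ᵥ S' w0)) = ι x *ᵥ S (S'.symm (S' w0))
    rw [← hS', S'.symm_apply_apply, S'.symm_apply_apply, hS]
  -- the conjugating matrix as a unit
  let Mu : (Matrix (Fin (m * s)) (Fin (m * s)) K)ˣ :=
    { val := LinearMap.toMatrix' (Tl : (Fin (m * s) → K) →ₗ[K] (Fin (m * s) → K))
      inv := LinearMap.toMatrix' (Tl.symm : (Fin (m * s) → K) →ₗ[K] (Fin (m * s) → K))
      val_inv := by
        rw [← LinearMap.toMatrix'_comp]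
        have h1 : (Tl : (Fin (m * s) → K) →ₗ[K] (Fin (m * s) → K)) ∘ₗ
            (Tl.symm : (Fin (m * s) → K) →ₗ[K] (Fin (m * s) → K)) = LinearMap.id :=
          LinearMap.ext fun w => Tl.apply_symm_apply w
        rw [h1, LinearMap.toMatrix'_id]
      inv_val := by
        rw [← LinearMap.toMatrix'_comp]
        have h1 : (Tl.symm : (Fin (m * s) → K) →ₗ[K] (Fin (m * s) → K)) ∘ₗ
            (Tl : (Fin (m * s) → K) →ₗ[K] (Fin (m * s) → K)) = LinearMap.id :=
          LinearMap.ext fun w => Tl.symm_apply_apply w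
        rw [h1, LinearMap.toMatrix'_id] }
  have hM : ∀ x : Matrix (Fin m) (Fin m) E,
      (↑Mu : Matrix (Fin (m * s)) (Fin (m * s)) K) * ι' x
        = ι x * (↑Mu : Matrix (Fin (m * s)) (Fin (m * s)) K) := by
    intro x
    have h1 : (↑Mu : Matrix (Fin (m * s)) (Fin (m * s)) K) * ι' x
        = LinearMap.toMatrix' ((Tl : (Fin (m * s) → K) →ₗ[K] (Fin (m * s) → K)) ∘ₗ
            Matrix.toLin' (ι' x)) := by
      rw [LinearMap.toMatrix'_comp, LinearMap.toMatrix'_toLin']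
    have h2 : ι x * (↑Mu : Matrix (Fin (m * s)) (Fin (m * s)) K)
        = LinearMap.toMatrix' (Matrix.toLin' (ι x) ∘ₗ
            (Tl : (Fin (m * s) → K) →ₗ[K] (Fin (m * s) → K))) := by
      rw [LinearMap.toMatrix'_comp, LinearMap.toMatrix'_toLin']
    rw [h1, h2]
    congr 1
    apply LinearMap.ext
    intro w
    show Tl (Matrix.toLin' (ι' x) w) = Matrix.toLin' (ι x) (Tl w)
    rw [Matrix.toLin'_apply, Matrix.toLin'_apply]
    exact hTl x w
  -- basic consequences
  have e2 : ∀ x : Matrix (Fin m) (Fin m) E,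
      (↑Mu⁻¹ : Matrix (Fin (m * s)) (Fin (m * s)) K) * ι x
        = ι' x * (↑Mu⁻¹ : Matrix (Fin (m * s)) (Fin (m * s)) K) := by
    intro x
    have h1 : (↑Mu⁻¹ : Matrix (Fin (m * s)) (Fin (m * s)) K) *
        ((↑Mu : Matrix (Fin (m * s)) (Fin (m * s)) K) * (ι' x *
          (↑Mu⁻¹ : Matrix (Fin (m * s)) (Fin (m * s)) K)))
        = (↑Mu⁻¹ : Matrix (Fin (m * s)) (Fin (m * s)) K) *
          (ι x * ((↑Mu : Matrix (Fin (m * s)) (Fin (m * s)) K) *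
            (↑Mu⁻¹ : Matrix (Fin (m * s)) (Fin (m * s)) K))) := by
      rw [← mul_assoc ((↑Mu : Matrix (Fin (m * s)) (Fin (m * s)) K)), hM x, mul_assoc]
    rw [← mul_assoc, Units.inv_mul, one_mul, Units.mul_inv, mul_one] at h1
    exact h1.symm
  have hconj : ∀ x : Matrix (Fin m) (Fin m) E,
      (↑Mu : Matrix (Fin (m * s)) (Fin (m * s)) K) *
        (ι' x * (↑Mu⁻¹ : Matrix (Fin (m * s)) (Fin (m * s)) K)) = ι x := by
    intro x
    rw [← e2, ← mul_assoc, Units.mul_inv, one_mul]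
  have hYc : ∀ (x : Matrix (Fin m) (Fin m) E) (g : G),
      ι x * (↑(Y g) : Matrix (Fin (m * s)) (Fin (m * s)) K)
        = (↑(Y g) : Matrix (Fin (m * s)) (Fin (m * s)) K) * ι (act g x) := by
    intro x g
    calc ι x * (↑(Y g) : Matrix (Fin (m * s)) (Fin (m * s)) K)
        = (↑(Y g) : Matrix (Fin (m * s)) (Fin (m * s)) K) *
          ((↑(Y g)⁻¹ : Matrix (Fin (m * s)) (Fin (m * s)) K) * ι x *
            (↑(Y g) : Matrix (Fin (m * s)) (Fin (m * s)) K)) := by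
          rw [← mul_assoc, ← mul_assoc, Units.mul_inv, one_mul]
      _ = _ := by rw [hY1 x g]
  have hY'c : ∀ (x : Matrix (Fin m) (Fin m) E) (g : G),
      ι' x * (↑(Y' g) : Matrix (Fin (m * s)) (Fin (m * s)) K)
        = (↑(Y' g) : Matrix (Fin (m * s)) (Fin (m * s)) K) * ι' (act g x) := by
    intro x g
    calc ι' x * (↑(Y' g) : Matrix (Fin (m * s)) (Fin (m * s)) K)
        = (↑(Y' g) : Matrix (Fin (m * s)) (Fin (m * s)) K) *
          ((↑(Y' g)⁻¹ : Matrix (Fin (m * s)) (Fin (m * s)) K) * ι' x *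
            (↑(Y' g) : Matrix (Fin (m * s)) (Fin (m * s)) K)) := by
          rw [← mul_assoc, ← mul_assoc, Units.mul_inv, one_mul]
      _ = _ := by rw [hY1' x g]
  have hYinvc : ∀ (x : Matrix (Fin m) (Fin m) E) (g : G),
      (↑(Y g)⁻¹ : Matrix (Fin (m * s)) (Fin (m * s)) K) * ι x
        = ι (act g x) * (↑(Y g)⁻¹ : Matrix (Fin (m * s)) (Fin (m * s)) K) := by
    intro x g
    calc (↑(Y g)⁻¹ : Matrix (Fin (m * s)) (Fin (m * s)) K) * ι x
        = (↑(Y g)⁻¹ : Matrix (Fin (m * s)) (Fin (m * s)) K) * ι x *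
          ((↑(Y g) : Matrix (Fin (m * s)) (Fin (m * s)) K) *
            (↑(Y g)⁻¹ : Matrix (Fin (m * s)) (Fin (m * s)) K)) := by
          rw [Units.mul_inv, mul_one]
      _ = ((↑(Y g)⁻¹ : Matrix (Fin (m * s)) (Fin (m * s)) K) * ι x *
            (↑(Y g) : Matrix (Fin (m * s)) (Fin (m * s)) K)) *
          (↑(Y g)⁻¹ : Matrix (Fin (m * s)) (Fin (m * s)) K) := by
          rw [← mul_assoc]
      _ = _ := by rw [hY1 x g]
  have tail : ∀ {a b c : Matrix (Fin (m * s)) (Fin (m * s)) K}, a * b = c * a →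
      ∀ C : Matrix (Fin (m * s)) (Fin (m * s)) K, a * (b * C) = c * (a * C) := by
    intro a b c hh C
    rw [← mul_assoc, hh, mul_assoc]
  -- scalar helpers
  have hscalar_mul : ∀ a b : E, ι (a • (1 : Matrix (Fin m) (Fin m) E)) *
      ι (b • (1 : Matrix (Fin m) (Fin m) E)) = ι ((a * b) • (1 : Matrix (Fin m) (Fin m) E)) := by
    intro a b
    rw [← _root_.map_mul]
    congr 1
    rw [smul_mul_smul_comm, one_mul]
  have hscalar_inj : ∀ a b : E, ι (a • (1 : Matrix (Fin m) (Fin m) E))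
      = ι (b • (1 : Matrix (Fin m) (Fin m) E)) → a = b := by
    intro a b hab
    have h1 := hι hab
    have h2 := congrFun (congrFun h1 ⟨0, hm⟩) ⟨0, hm⟩
    simpa [Matrix.smul_apply, Matrix.one_apply_eq] using h2
  -- find the gamma function
  have hexz : ∀ g : G, ∃ z : Eˣ,
      (↑((Y g)⁻¹ * (Mu * Y' g * Mu⁻¹)) : Matrix (Fin (m * s)) (Fin (m * s)) K)
        = ι ((z : E) • (1 : Matrix (Fin m) (Fin m) E)) := by
    intro g
    apply centralizer_scalar m s hm hs ι hι _ (Units.isUnit _)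
    intro x
    obtain ⟨y, rfl⟩ := (act g).surjective x
    simp only [Units.val_mul, mul_assoc]
    rw [e2 (act g y), tail (hY'c y g).symm, tail (hM y), tail (hYinvc y g)]
  choose γ hγ using hexz
  have hZdecomp : ∀ g : G, (↑(Mu * Y' g * Mu⁻¹) : Matrix (Fin (m * s)) (Fin (m * s)) K)
      = (↑(Y g) : Matrix (Fin (m * s)) (Fin (m * s)) K) *
        ι ((γ g : E) • (1 : Matrix (Fin m) (Fin m) E)) := by
    intro g
    have h1 : (Y g) * ((Y g)⁻¹ * (Mu * Y' g * Mu⁻¹)) = Mu * Y' g * Mu⁻¹ :=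
      mul_inv_cancel_left _ _
    have h2 := congrArg Units.val h1
    rw [Units.val_mul, hγ g] at h2
    exact h2.symm
  have hZn : ∀ n : N, (↑(Mu * Y' ↑n * Mu⁻¹) : Matrix (Fin (m * s)) (Fin (m * s)) K)
      = ι (↑(X n) : Matrix (Fin m) (Fin m) E) := by
    intro n
    rw [Units.val_mul, Units.val_mul, hY2' n, mul_assoc]
    exact hconj _
  -- gamma is 1 on N
  have hγN : ∀ n : N, γ ↑n = 1 := by
    intro n
    have h2 := hZdecomp ↑n
    rw [hZn n, ← hY2 n] at h2
    have h3 : (↑(Y ↑n) : Matrix (Fin (m * s)) (Fin (m * s)) K) * 1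
        = (↑(Y ↑n) : Matrix (Fin (m * s)) (Fin (m * s)) K) *
          ι ((γ ↑n : E) • (1 : Matrix (Fin m) (Fin m) E)) := by
      rw [mul_one]; exact h2
    have h4 := (Units.mul_right_inj (Y ↑n)).mp h3
    have h5 : ι ((1 : E) • (1 : Matrix (Fin m) (Fin m) E))
        = ι ((γ ↑n : E) • (1 : Matrix (Fin m) (Fin m) E)) := by
      rw [one_smul, _root_.map_one]; exact h4
    exact (Units.ext (hscalar_inj _ _ h5)).symm
  -- gamma is constant on cosets
  have hγcoset : ∀ (g : G) (n : N), γ (g * ↑n) = γ g := by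
    intro g n
    have hZ1 : (Mu * Y' (g * ↑n) * Mu⁻¹) = (Mu * Y' g * Mu⁻¹) * (Mu * Y' ↑n * Mu⁻¹) := by
      rw [(hY3' g n).1]
      group
    have h2 := congrArg Units.val hZ1
    rw [hZdecomp (g * ↑n), Units.val_mul, hZdecomp g, hZn n] at h2
    have hswap : ι ((γ g : E) • (1 : Matrix (Fin m) (Fin m) E)) *
        ι (↑(X n) : Matrix (Fin m) (Fin m) E)
        = ι (↑(X n) : Matrix (Fin m) (Fin m) E) *
          ι ((γ g : E) • (1 : Matrix (Fin m) (Fin m) E)) := by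
      rw [← _root_.map_mul, ← _root_.map_mul, smul_one_mul, ← mul_smul_one]
    have h3 : (↑(Y g) : Matrix (Fin (m * s)) (Fin (m * s)) K) *
        ι ((γ g : E) • (1 : Matrix (Fin m) (Fin m) E)) *
        ι (↑(X n) : Matrix (Fin m) (Fin m) E)
        = (↑(Y (g * ↑n)) : Matrix (Fin (m * s)) (Fin (m * s)) K) *
          ι ((γ g : E) • (1 : Matrix (Fin m) (Fin m) E)) := by
      rw [mul_assoc, hswap, ← mul_assoc, ← hY2 n, ← Units.val_mul, ← (hY3 g n).1]
    rw [h3] at h2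
    exact Units.ext (hscalar_inj _ _ ((Units.mul_right_inj (Y (g * ↑n))).mp h2))
  -- the cocycle relation
  refine ⟨γ, hγcoset, hγN, ?_⟩
  intro g h
  have hsandwich : ∀ (A : Matrix (Fin (m * s)) (Fin (m * s)) K)
      (x : Matrix (Fin m) (Fin m) E),
      (↑Mu : Matrix (Fin (m * s)) (Fin (m * s)) K) * (A * ι' x) *
        (↑Mu⁻¹ : Matrix (Fin (m * s)) (Fin (m * s)) K)
      = ((↑Mu : Matrix (Fin (m * s)) (Fin (m * s)) K) * A *
          (↑Mu⁻¹ : Matrix (Fin (m * s)) (Fin (m * s)) K)) * ι x := by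
    intro A x
    simp only [mul_assoc]
    rw [← e2 x]
  have hA : (↑((Mu * Y' g * Mu⁻¹) * (Mu * Y' h * Mu⁻¹)) :
        Matrix (Fin (m * s)) (Fin (m * s)) K)
      = (↑(Mu * Y' (g * h) * Mu⁻¹) : Matrix (Fin (m * s)) (Fin (m * s)) K) *
        ι ((α' g h : E) • (1 : Matrix (Fin m) (Fin m) E)) := by
    have h1 : (Mu * Y' g * Mu⁻¹) * (Mu * Y' h * Mu⁻¹) = Mu * (Y' g * Y' h) * Mu⁻¹ := by
      group
    rw [h1, Units.val_mul, Units.val_mul, Units.val_mul, hα' g h]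
    have := hsandwich ((↑(Y' (g * h)) : Matrix (Fin (m * s)) (Fin (m * s)) K))
      ((α' g h : E) • (1 : Matrix (Fin m) (Fin m) E))
    rw [this, Units.val_mul, Units.val_mul]
  have hmove : ι ((γ g : E) • (1 : Matrix (Fin m) (Fin m) E)) *
      (↑(Y h) : Matrix (Fin (m * s)) (Fin (m * s)) K)
      = (↑(Y h) : Matrix (Fin (m * s)) (Fin (m * s)) K) *
        ι ((σ h (γ g : E)) • (1 : Matrix (Fin m) (Fin m) E)) := by
    have h1 := hYc ((γ g : E) • (1 : Matrix (Fin m) (Fin m) E)) h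
    have h2 : act h ((γ g : E) • (1 : Matrix (Fin m) (Fin m) E))
        = (σ h (γ g : E)) • (1 : Matrix (Fin m) (Fin m) E) := by
      rw [hσ h (γ g : E) 1, _root_.map_one]
    rw [h2] at h1
    exact h1
  have hB : (↑((Mu * Y' g * Mu⁻¹) * (Mu * Y' h * Mu⁻¹)) :
        Matrix (Fin (m * s)) (Fin (m * s)) K)
      = (↑(Y (g * h)) : Matrix (Fin (m * s)) (Fin (m * s)) K) *
        ι (((γ (g * h) : E) * (α' g h : E)) • (1 : Matrix (Fin m) (Fin m) E)) := by
    rw [hA, hZdecomp (g * h), mul_assoc, hscalar_mul]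
  have hC : (↑((Mu * Y' g * Mu⁻¹) * (Mu * Y' h * Mu⁻¹)) :
        Matrix (Fin (m * s)) (Fin (m * s)) K)
      = (↑(Y (g * h)) : Matrix (Fin (m * s)) (Fin (m * s)) K) *
        ι (((α g h : E) * σ h (γ g : E) * (γ h : E)) • (1 : Matrix (Fin m) (Fin m) E)) := by
    rw [Units.val_mul, hZdecomp g, hZdecomp h]
    calc (↑(Y g) : Matrix (Fin (m * s)) (Fin (m * s)) K) *
          ι ((γ g : E) • (1 : Matrix (Fin m) (Fin m) E)) *
          ((↑(Y h) : Matrix (Fin (m * s)) (Fin (m * s)) K) *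
            ι ((γ h : E) • (1 : Matrix (Fin m) (Fin m) E)))
        = (↑(Y g) : Matrix (Fin (m * s)) (Fin (m * s)) K) *
          ((ι ((γ g : E) • (1 : Matrix (Fin m) (Fin m) E)) *
            (↑(Y h) : Matrix (Fin (m * s)) (Fin (m * s)) K)) *
            ι ((γ h : E) • (1 : Matrix (Fin m) (Fin m) E))) := by
          simp only [mul_assoc]
      _ = (↑(Y g) : Matrix (Fin (m * s)) (Fin (m * s)) K) *
          ((↑(Y h) : Matrix (Fin (m * s)) (Fin (m * s)) K) *
            (ι ((σ h (γ g : E)) • (1 : Matrix (Fin m) (Fin m) E)) *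
              ι ((γ h : E) • (1 : Matrix (Fin m) (Fin m) E)))) := by
          rw [hmove]
          simp only [mul_assoc]
      _ = (↑(Y g) : Matrix (Fin (m * s)) (Fin (m * s)) K) *
          (↑(Y h) : Matrix (Fin (m * s)) (Fin (m * s)) K) *
          ι (((σ h (γ g : E)) * (γ h : E)) • (1 : Matrix (Fin m) (Fin m) E)) := by
          rw [hscalar_mul]
          simp only [mul_assoc]
      _ = (↑(Y (g * h)) : Matrix (Fin (m * s)) (Fin (m * s)) K) *
          ι ((α g h : E) • (1 : Matrix (Fin m) (Fin m) E)) *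
          ι (((σ h (γ g : E)) * (γ h : E)) • (1 : Matrix (Fin m) (Fin m) E)) := by
          rw [hα g h]
      _ = (↑(Y (g * h)) : Matrix (Fin (m * s)) (Fin (m * s)) K) *
          ι (((α g h : E) * σ h (γ g : E) * (γ h : E)) • (1 : Matrix (Fin m) (Fin m) E)) := by
          rw [mul_assoc, hscalar_mul, mul_assoc]
  have hEq : (γ (g * h) : E) * (α' g h : E) = (α g h : E) * σ h (γ g : E) * (γ h : E) :=
    hscalar_inj _ _ ((Units.mul_right_inj (Y (g * h))).mp (hB.symm.trans hC))
  have hne : (γ (g * h) : E) ≠ 0 := Units.ne_zero _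
  rw [Units.val_inv_eq_inv_val]
  field_simp
  linear_combination hEq
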